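/- If a Hadamard matrix of order n+1 ≥ 2 has the GKS property (viewing its normalized columns as an orthonormal basis for the uniform measure), then n+1 is a power of 2. -/
import Mathlib


/-- If a Hadamard matrix `H` of order `n+1 ≥ 2` (entries `±1`, pairwise
orthogonal columns, first row and first column consisting of `+1`) has the GKS property
— i.e. all averaged triple products of its columns are nonnegative — then `n+1` is a
power of `2`. -/
theorem stmt6 (n : ℕ) (hn : 2 ≤ n + 1)
    (H : Matrix (Fin (n + 1)) (Fin (n + 1)) ℝ)
    (hentries : ∀ x i, H x i = 1 ∨ H x i = -1)
    (hcolorth : ∀ i j, i ≠ j → ∑ x, H x i * H x j = 0)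
    (hrow0 : ∀ i, H 0 i = 1) (hcol0 : ∀ x, H x 0 = 1)
    (hGKS : ∀ i j k, 0 ≤ ∑ x, H x i * H x j * H x k) :
    ∃ k : ℕ, n + 1 = 2 ^ k := by
  classical
  have hsq : ∀ x i, H x i * H x i = 1 := by
    intro x i
    rcases hentries x i with h | h <;> rw [h] <;> norm_num
  have hNne : ((n : ℝ) + 1) ≠ 0 := by positivity
  -- transpose times H
  have hHtH : H.transpose * H = ((n : ℝ) + 1) • 1 := by
    ext i j
    simp only [Matrix.mul_apply, Matrix.transpose_apply, Matrix.smul_apply,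
      Matrix.one_apply, smul_eq_mul]
    by_cases h : i = j
    · subst h
      rw [if_pos rfl, mul_one, Finset.sum_congr rfl fun x _ => hsq x i]
      simp
    · rw [if_neg h, mul_zero]
      exact hcolorth i j h
  have h1 : (((n : ℝ) + 1)⁻¹ • H.transpose) * H = 1 := by
    rw [Matrix.smul_mul, hHtH, smul_smul, inv_mul_cancel₀ hNne, one_smul]
  have h2 : H * (((n : ℝ) + 1)⁻¹ • H.transpose) = 1 := mul_eq_one_comm.mp h1
  have hHHt : H * H.transpose = ((n : ℝ) + 1) • 1 := by
    rw [Matrix.mul_smul] at h2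
    calc H * H.transpose
        = ((n : ℝ) + 1) • (((n : ℝ) + 1)⁻¹ • (H * H.transpose)) := by
          rw [smul_smul, mul_inv_cancel₀ hNne, one_smul]
      _ = ((n : ℝ) + 1) • 1 := by rw [h2]
  -- row orthogonality
  have hrow : ∀ x y : Fin (n + 1), x ≠ y → ∑ k, H x k * H y k = 0 := by
    intro x y hxy
    have := congrFun (congrFun hHHt x) y
    simpa [Matrix.mul_apply, Matrix.transpose_apply, Matrix.one_apply, hxy] using this
  have hrowdiag : ∀ x : Fin (n + 1), ∑ k, H x k * H x k = (n : ℝ) + 1 := by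
    intro x
    rw [Finset.sum_congr rfl fun k _ => hsq x k]
    simp
  have hrowsum : ∀ x : Fin (n + 1), x ≠ 0 → ∑ k, H x k = 0 := by
    intro x hx
    have := hrow x 0 hx
    simpa [hrow0, hcol0] using this
  -- KEY: columns are closed under pointwise multiplication
  have key : ∀ i j : Fin (n + 1), ∃ k, ∀ x, H x i * H x j = H x k := by
    intro i j
    have hfsq : ∀ x, (H x i * H x j) * (H x i * H x j) = 1 := by
      intro x
      have : (H x i * H x j) * (H x i * H x j) = (H x i * H x i) * (H x j * H x j) := by ring
      rw [this, hsq, hsq, mul_one]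
    have hpm : ∀ (x k : Fin (n + 1)),
        H x i * H x j * H x k = 1 ∨ H x i * H x j * H x k = -1 := by
      intro x k
      rcases hentries x i with a | a <;> rcases hentries x j with b | b <;>
        rcases hentries x k with c | c <;> rw [a, b, c] <;> norm_num
    have T1 : ∑ k, ∑ x, H x i * H x j * H x k = (n : ℝ) + 1 := by
      rw [Finset.sum_comm]
      have step : ∀ x : Fin (n + 1),
          ∑ k, H x i * H x j * H x k = (H x i * H x j) * ∑ k, H x k := by
        intro x; rw [Finset.mul_sum]
      rw [Finset.sum_congr rfl fun x _ => step x]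
      rw [Finset.sum_eq_single 0]
      · rw [hrow0, hrow0]
        have : ∑ k, H 0 k = (n : ℝ) + 1 := by
          rw [Finset.sum_congr rfl fun k _ => hrow0 k]; simp
        rw [this]; ring
      · intro x _ hx
        rw [hrowsum x hx, mul_zero]
      · simp
    have T2 : ∑ k, (∑ x, H x i * H x j * H x k) ^ 2 = ((n : ℝ) + 1) ^ 2 := by
      have expand : ∀ k : Fin (n + 1), (∑ x, H x i * H x j * H x k) ^ 2 =
          ∑ x, ∑ y, (H x i * H x j) * (H y i * H y j) * (H x k * H y k) := by
        intro k
        rw [sq, Finset.sum_mul_sum]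
        refine Finset.sum_congr rfl fun x _ => Finset.sum_congr rfl fun y _ => by ring
      rw [Finset.sum_congr rfl fun k _ => expand k, Finset.sum_comm]
      have step : ∀ x : Fin (n + 1),
          ∑ k, ∑ y, (H x i * H x j) * (H y i * H y j) * (H x k * H y k)
            = ∑ y, (H x i * H x j) * (H y i * H y j) * ∑ k, H x k * H y k := by
        intro x
        rw [Finset.sum_comm]
        exact Finset.sum_congr rfl fun y _ => by rw [Finset.mul_sum]
      rw [Finset.sum_congr rfl fun x _ => step x]
      have step2 : ∀ x : Fin (n + 1),
          ∑ y, (H x i * H x j) * (H y i * H y j) * ∑ k, H x k * H y k = (n : ℝ) + 1 := by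
        intro x
        rw [Finset.sum_eq_single x]
        · rw [hrowdiag x, hfsq x, one_mul]
        · intro y _ hy
          rw [hrow x y (fun h => hy h.symm), mul_zero]
        · simp
      rw [Finset.sum_congr rfl fun x _ => step2 x]
      simp [sq]
      ring
    have hub : ∀ k, (∑ x, H x i * H x j * H x k) ≤ (n : ℝ) + 1 := by
      intro k
      calc ∑ x, H x i * H x j * H x k ≤ ∑ _x : Fin (n + 1), (1 : ℝ) :=
            Finset.sum_le_sum fun x _ => by rcases hpm x k with h | h <;> rw [h] <;> norm_num
        _ = (n : ℝ) + 1 := by simp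
    have hlb : ∀ k, 0 ≤ ∑ x, H x i * H x j * H x k := fun k => hGKS i j k
    have hzero : ∑ k, (∑ x, H x i * H x j * H x k) *
        (((n : ℝ) + 1) - ∑ x, H x i * H x j * H x k) = 0 := by
      have expand2 : ∑ k, (∑ x, H x i * H x j * H x k) *
          (((n : ℝ) + 1) - ∑ x, H x i * H x j * H x k)
          = ((n : ℝ) + 1) * (∑ k, ∑ x, H x i * H x j * H x k)
            - ∑ k, (∑ x, H x i * H x j * H x k) ^ 2 := by
        rw [Finset.mul_sum, ← Finset.sum_sub_distrib]
        exact Finset.sum_congr rfl fun k _ => by ring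
      rw [expand2, T1, T2]; ring
    have heach := (Finset.sum_eq_zero_iff_of_nonneg
      (fun k _ => mul_nonneg (hlb k) (by linarith [hub k]))).mp hzero
    have hex : ∃ k, (∑ x, H x i * H x j * H x k) ≠ 0 := by
      by_contra h
      push_neg at h
      rw [Finset.sum_congr rfl fun k _ => h k] at T1
      simp at T1
      linarith
    obtain ⟨k, hk⟩ := hex
    have hSk : ∑ x, H x i * H x j * H x k = (n : ℝ) + 1 := by
      have := heach k (Finset.mem_univ k)
      rcases mul_eq_zero.mp this with h | h
      · exact absurd h hk
      · linarith
    refine ⟨k, fun x => ?_⟩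
    have hzz : ∑ x, (1 - H x i * H x j * H x k) = 0 := by
      rw [Finset.sum_sub_distrib, hSk]
      simp
    have hterm := (Finset.sum_eq_zero_iff_of_nonneg
      (fun x _ => by rcases hpm x k with h | h <;> rw [h] <;> norm_num)).mp hzz
    have h1x : H x i * H x j * H x k = 1 := by
      have := hterm x (Finset.mem_univ x)
      linarith
    rcases hentries x k with h | h
    · rw [h] at h1x ⊢; linarith
    · rw [h] at h1x ⊢; linarith
  -- translate to ZMod 2 vectors
  set v : Fin (n + 1) → (Fin (n + 1) → ZMod 2) :=
    fun i x => if H x i = 1 then 0 else 1 with hv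
  have hvinj : Function.Injective v := by
    intro i j hij
    by_contra hne
    have hsame : ∀ x, H x i = H x j := by
      intro x
      have hx := congrFun hij x
      simp only [hv] at hx
      rcases hentries x i with a | a <;> rcases hentries x j with b | b
      · rw [a, b]
      · rw [a, b] at hx; norm_num at hx
      · rw [a, b] at hx; norm_num at hx
      · rw [a, b]
    have h0 := hcolorth i j hne
    rw [Finset.sum_congr rfl fun x _ => by rw [← hsame x, hsq x i]] at h0
    simp at h0
    exact hNne h0
  have hnegz : ∀ a : Fin (n + 1) → ZMod 2, -a = a := by
    intro a; funext x
    have : ∀ z : ZMod 2, -z = z := by decide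
    exact this (a x)
  let A : AddSubgroup (Fin (n + 1) → ZMod 2) :=
    { carrier := Set.range v
      zero_mem' := ⟨0, by funext x; simp [hv, hcol0 x]⟩
      add_mem' := by
        rintro a b ⟨i, rfl⟩ ⟨j, rfl⟩
        obtain ⟨k, hk⟩ := key i j
        refine ⟨k, ?_⟩
        funext x
        have hkx := hk x
        simp only [hv, Pi.add_apply]
        rcases hentries x i with a | a <;> rcases hentries x j with b | b <;>
          rw [a, b] at hkx <;> norm_num at hkx <;>
          rw [a, b, ← hkx] <;> norm_num <;> decide
      neg_mem' := by
        rintro a ⟨i, rfl⟩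
        rw [hnegz]
        exact ⟨i, rfl⟩ }
  have ecard : Nat.card A = n + 1 := by
    have e : Fin (n + 1) ≃ A :=
      Equiv.ofBijective (fun i => ⟨v i, ⟨i, rfl⟩⟩)
        ⟨fun a b hab => hvinj (congrArg Subtype.val hab), by rintro ⟨a, i, rfl⟩; exact ⟨i, rfl⟩⟩
    rw [← Nat.card_congr e, Nat.card_eq_fintype_card, Fintype.card_fin]
  have hdvd : (n + 1) ∣ 2 ^ (n + 1) := by
    have hd := AddSubgroup.card_addSubgroup_dvd_card A
    rw [ecard] at hd
    simpa [Nat.card_eq_fintype_card, ZMod.card] using hd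
  obtain ⟨k, -, hk⟩ := (Nat.dvd_prime_pow Nat.prime_two).mp hdvd
  exact ⟨k, hk⟩
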